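/- (Free-support barycenter, two-marginal case.) Let X₁ = (X₁,d₁,μ₁), X₂ = (X₂,d₂,μ₂) be compact mm-spaces and ρ₁, ρ₂ ≥ 0 with ρ₁+ρ₂ = 1. Let π* ∈ Π(μ₁,μ₂) minimize ∬ ρ₁ρ₂ |d₁(x₁,x₁') − d₂(x₂,x₂')|² dπ dπ. Then the mm-space S* = (X₁ × X₂, d*, π*) with d*((x₁,x₂),(x₁',x₂')) = ρ₁ d₁(x₁,x₁') + ρ₂ d₂(x₂,x₂') minimizes S ↦ ρ₁ GW(S, X₁)² + ρ₂ GW(S, X₂)² over all compact mm-spaces S. -/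

import Mathlib

open MeasureTheory Filter Topology

open ProbabilityTheory Pointwise

/-- `π` is a coupling of `μ` and `ν`. -/
def IsCoupling {X Y : Type*} [MeasurableSpace X] [MeasurableSpace Y]
    (π : Measure (X × Y)) (μ : Measure X) (ν : Measure Y) : Prop :=
  π.map Prod.fst = μ ∧ π.map Prod.snd = ν

/-- The GW cost of a plan, for arbitrary (distance-like) cost kernels `dA, dB`. -/
noncomputable def gwCostD {A B : Type*} [MeasurableSpace A] [MeasurableSpace B]
    (dA : A → A → ℝ) (dB : B → B → ℝ) (π : Measure (A × B)) : ℝ :=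
  ∫ p, ∫ q, (dA p.1 q.1 - dB p.2 q.2) ^ 2 ∂π ∂π

/-- The squared GW distance between gauged measure spaces `(A, dA, μ)` and `(B, dB, ν)`. -/
noncomputable def gwSqD {A B : Type*} [MeasurableSpace A] [MeasurableSpace B]
    (dA : A → A → ℝ) (dB : B → B → ℝ) (μ : Measure A) (ν : Measure B) : ℝ :=
  sInf {c | ∃ π : Measure (A × B), IsCoupling π μ ν ∧ c = gwCostD dA dB π}

section Aux

open ProbabilityTheory Pointwise

/-- continuous functions on compact spaces are integrable -/
lemma aux_integrable {A : Type*} [MeasurableSpace A] [TopologicalSpace A] [CompactSpace A]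
    [OpensMeasurableSpace A] (μ : Measure A) [IsFiniteMeasure μ] {f : A → ℝ}
    (hf : Continuous f) : Integrable f μ :=
  hf.integrable_of_hasCompactSupport
    (IsCompact.of_isClosed_subset isCompact_univ (isClosed_tsupport f) (Set.subset_univ _))

/-- iterated integral = integral over the product, на compact spaces with continuous integrand -/
lemma aux_double {A : Type*} [MetricSpace A] [CompactSpace A] [MeasurableSpace A] [BorelSpace A]
    (μ : Measure A) [IsFiniteMeasure μ] {F : A → A → ℝ}
    (hF : Continuous fun z : A × A => F z.1 z.2) :
    ∫ p, ∫ q, F p q ∂μ ∂μ = ∫ z, F z.1 z.2 ∂(μ.prod μ) :=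
  MeasureTheory.integral_integral (aux_integrable (μ.prod μ) hF)

lemma gwCostD_nonneg {A B : Type*} [MeasurableSpace A] [MeasurableSpace B]
    (dA : A → A → ℝ) (dB : B → B → ℝ) (π : Measure (A × B)) :
    0 ≤ gwCostD dA dB π :=
  integral_nonneg fun _ => integral_nonneg fun _ => sq_nonneg _

lemma gwCostD_eq_prod {A B : Type*}
    [MetricSpace A] [CompactSpace A] [MeasurableSpace A] [BorelSpace A]
    [MetricSpace B] [CompactSpace B] [MeasurableSpace B] [BorelSpace B]
    {dA : A → A → ℝ} {dB : B → B → ℝ}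
    (hA : Continuous fun p : A × A => dA p.1 p.2) (hB : Continuous fun p : B × B => dB p.1 p.2)
    (π : Measure (A × B)) [IsFiniteMeasure π] :
    gwCostD dA dB π = ∫ z, (dA z.1.1 z.2.1 - dB z.1.2 z.2.2) ^ 2 ∂(π.prod π) := by
  have hc : Continuous fun z : (A × B) × (A × B) => (dA z.1.1 z.2.1 - dB z.1.2 z.2.2) ^ 2 := by
    apply Continuous.pow
    exact (hA.comp ((continuous_fst.fst).prodMk (continuous_snd.fst))).sub
      (hB.comp ((continuous_fst.snd).prodMk (continuous_snd.snd)))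
  exact aux_double π hc

/-- the product measure is a coupling -/
lemma aux_prod_coupling {A B : Type*} [MeasurableSpace A] [MeasurableSpace B]
    (μ : Measure A) (ν : Measure B) [IsProbabilityMeasure μ] [IsProbabilityMeasure ν] :
    IsCoupling (μ.prod ν) μ ν :=
  ⟨Measure.fst_prod, Measure.snd_prod⟩

lemma aux_combine {A B : Set ℝ} {c ρ₁ ρ₂ : ℝ} (h₁ : 0 ≤ ρ₁) (h₂ : 0 ≤ ρ₂)
    (hA : A.Nonempty) (hB : B.Nonempty)
    (h : ∀ a ∈ A, ∀ b ∈ B, c ≤ ρ₁ * a + ρ₂ * b) :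
    c ≤ ρ₁ * sInf A + ρ₂ * sInf B := by
  have k1 : ∀ b ∈ B, c - ρ₂ * b ≤ ρ₁ * sInf A := by
    intro b hb
    rw [show ρ₁ * sInf A = ρ₁ • sInf A from rfl, ← Real.sInf_smul_of_nonneg h₁]
    refine le_csInf hA.smul_set ?_
    rintro x ⟨a, ha, rfl⟩
    have := h a ha b hb
    simp only [smul_eq_mul]
    linarith
  have k3 : c - ρ₁ * sInf A ≤ ρ₂ * sInf B := by
    rw [show ρ₂ * sInf B = ρ₂ • sInf B from rfl, ← Real.sInf_smul_of_nonneg h₂]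
    refine le_csInf hB.smul_set ?_
    rintro x ⟨b, hb, rfl⟩
    have := k1 b hb
    simp only [smul_eq_mul]
    linarith
  linarith

/-- the first marginal-pair of a glued measure -/
lemma aux_glue_fst {S X Y : Type*} [MeasurableSpace S] [MeasurableSpace X] [MeasurableSpace Y]
    (σ : Measure S) [SFinite σ] (κ : Kernel S X) (η : Kernel S Y)
    [IsMarkovKernel κ] [IsMarkovKernel η] :
    (σ ⊗ₘ (κ ×ₖ η)).map (fun p => (p.1, p.2.1)) = σ ⊗ₘ κ := by
  ext s hs
  rw [Measure.map_apply (by fun_prop) hs,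
    Measure.compProd_apply (hs.preimage (by fun_prop)), Measure.compProd_apply hs]
  refine lintegral_congr fun a => ?_
  have hpre : (Prod.mk a ⁻¹' ((fun p : S × (X × Y) => (p.1, p.2.1)) ⁻¹' s))
      = Prod.fst ⁻¹' (Prod.mk a ⁻¹' s) := rfl
  rw [hpre, Kernel.prod_apply,
    ← Measure.map_apply measurable_fst (hs.preimage measurable_prodMk_left)]
  rw [show ((κ a).prod (η a)).map Prod.fst = ((κ a).prod (η a)).fst from rfl, Measure.fst_prod]

lemma aux_glue_snd {S X Y : Type*} [MeasurableSpace S] [MeasurableSpace X] [MeasurableSpace Y]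
    (σ : Measure S) [SFinite σ] (κ : Kernel S X) (η : Kernel S Y)
    [IsMarkovKernel κ] [IsMarkovKernel η] :
    (σ ⊗ₘ (κ ×ₖ η)).map (fun p => (p.1, p.2.2)) = σ ⊗ₘ η := by
  ext s hs
  rw [Measure.map_apply (by fun_prop) hs,
    Measure.compProd_apply (hs.preimage (by fun_prop)), Measure.compProd_apply hs]
  refine lintegral_congr fun a => ?_
  have hpre : (Prod.mk a ⁻¹' ((fun p : S × (X × Y) => (p.1, p.2.2)) ⁻¹' s))
      = Prod.snd ⁻¹' (Prod.mk a ⁻¹' s) := rfl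
  rw [hpre, Kernel.prod_apply,
    ← Measure.map_apply measurable_snd (hs.preimage measurable_prodMk_left)]
  rw [show ((κ a).prod (η a)).map Prod.snd = ((κ a).prod (η a)).snd from rfl, Measure.snd_prod]

end Aux

theorem free_support_barycenter
    {X₁ X₂ : Type*}
    [MetricSpace X₁] [CompactSpace X₁] [MeasurableSpace X₁] [BorelSpace X₁]
    [MetricSpace X₂] [CompactSpace X₂] [MeasurableSpace X₂] [BorelSpace X₂]
    (μ₁ : Measure X₁) (μ₂ : Measure X₂)
    [IsProbabilityMeasure μ₁] [IsProbabilityMeasure μ₂]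
    (ρ₁ ρ₂ : ℝ) (h₁ : 0 ≤ ρ₁) (h₂ : 0 ≤ ρ₂) (hsum : ρ₁ + ρ₂ = 1)
    (πstar : Measure (X₁ × X₂)) (hcoup : IsCoupling πstar μ₁ μ₂)
    (hopt : ∀ π : Measure (X₁ × X₂), IsCoupling π μ₁ μ₂ →
      (∫ p, ∫ q, ρ₁ * ρ₂ * (dist p.1 q.1 - dist p.2 q.2) ^ 2 ∂πstar ∂πstar) ≤
      (∫ p, ∫ q, ρ₁ * ρ₂ * (dist p.1 q.1 - dist p.2 q.2) ^ 2 ∂π ∂π)) :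
    ∀ {S : Type*} [MetricSpace S] [CompactSpace S] [MeasurableSpace S] [BorelSpace S]
      (σ : Measure S), IsProbabilityMeasure σ →
      ρ₁ * gwSqD (fun p q : X₁ × X₂ => ρ₁ * dist p.1 q.1 + ρ₂ * dist p.2 q.2)
            (fun x x' : X₁ => dist x x') πstar μ₁
        + ρ₂ * gwSqD (fun p q : X₁ × X₂ => ρ₁ * dist p.1 q.1 + ρ₂ * dist p.2 q.2)
            (fun x x' : X₂ => dist x x') πstar μ₂
      ≤ ρ₁ * gwSqD (fun s s' : S => dist s s') (fun x x' : X₁ => dist x x') σ μ₁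
        + ρ₂ * gwSqD (fun s s' : S => dist s s') (fun x x' : X₂ => dist x x') σ μ₂ := by
  classical
  obtain ⟨hfst, hsnd⟩ := hcoup
  haveI hπstar : IsProbabilityMeasure πstar := by
    constructor
    have h := congrArg (fun m : Measure X₁ => m Set.univ) hfst
    simpa [Measure.map_apply measurable_fst MeasurableSet.univ] using h
  intro S _ _ _ _ σ hσ
  haveI := hσ
  set dX : (X₁ × X₂) → (X₁ × X₂) → ℝ :=
    fun p q => ρ₁ * dist p.1 q.1 + ρ₂ * dist p.2 q.2 with hdX
  set C : ℝ := ∫ z, (dist z.1.1 z.2.1 - dist z.1.2 z.2.2) ^ 2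
      ∂(πstar.prod πstar) with hCdef
  have hC0 : 0 ≤ C := integral_nonneg fun z => sq_nonneg _
  have hρ12 : ρ₁ = 1 - ρ₂ := by linarith
  have cdX : Continuous fun p : (X₁ × X₂) × (X₁ × X₂) => dX p.1 p.2 := by
    simp only [hdX]; fun_prop
  -- Step 1 : upper bound for the barycenter candidate
  have hub1 : gwSqD dX (fun x x' : X₁ => dist x x') πstar μ₁ ≤ ρ₂ ^ 2 * C := by
    set g : X₁ × X₂ → (X₁ × X₂) × X₁ := fun p => (p, p.1) with hg
    have hgm : Measurable g := by fun_prop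
    haveI : IsProbabilityMeasure (πstar.map g) := Measure.isProbabilityMeasure_map hgm.aemeasurable
    have hcostA : gwCostD dX (fun x x' : X₁ => dist x x') (πstar.map g) = ρ₂ ^ 2 * C := by
      rw [gwCostD_eq_prod cdX continuous_dist, Measure.map_prod_map _ _ hgm hgm,
        integral_map (by fun_prop)
          (Continuous.aestronglyMeasurable (by simp only [hdX]; fun_prop))]
      have : (fun x : (X₁ × X₂) × (X₁ × X₂) =>
          (dX (Prod.map g g x).1.1 (Prod.map g g x).2.1
            - dist (Prod.map g g x).1.2 (Prod.map g g x).2.2) ^ 2)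
          = fun x => ρ₂ ^ 2 * (dist x.1.1 x.2.1 - dist x.1.2 x.2.2) ^ 2 := by
        funext x
        simp only [hdX, Prod.map, hg]
        rw [hρ12]; ring
      rw [this, integral_const_mul]
    calc gwSqD dX (fun x x' : X₁ => dist x x') πstar μ₁
        ≤ gwCostD dX (fun x x' : X₁ => dist x x') (πstar.map g) := by
          apply csInf_le
          · exact ⟨0, fun c ⟨π', _, hc⟩ => hc ▸ gwCostD_nonneg _ _ π'⟩
          · refine ⟨πstar.map g, ⟨?_, ?_⟩, rfl⟩
            · rw [Measure.map_map measurable_fst hgm,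
                show (Prod.fst ∘ g) = id from rfl, Measure.map_id]
            · rw [Measure.map_map measurable_snd hgm]
              exact hfst
      _ = ρ₂ ^ 2 * C := hcostA
  have hub2 : gwSqD dX (fun x x' : X₂ => dist x x') πstar μ₂ ≤ ρ₁ ^ 2 * C := by
    set g : X₁ × X₂ → (X₁ × X₂) × X₂ := fun p => (p, p.2) with hg
    have hgm : Measurable g := by fun_prop
    haveI : IsProbabilityMeasure (πstar.map g) := Measure.isProbabilityMeasure_map hgm.aemeasurable
    have hcostA : gwCostD dX (fun x x' : X₂ => dist x x') (πstar.map g) = ρ₁ ^ 2 * C := by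
      rw [gwCostD_eq_prod cdX continuous_dist, Measure.map_prod_map _ _ hgm hgm,
        integral_map (by fun_prop)
          (Continuous.aestronglyMeasurable (by simp only [hdX]; fun_prop))]
      have : (fun x : (X₁ × X₂) × (X₁ × X₂) =>
          (dX (Prod.map g g x).1.1 (Prod.map g g x).2.1
            - dist (Prod.map g g x).1.2 (Prod.map g g x).2.2) ^ 2)
          = fun x => ρ₁ ^ 2 * (dist x.1.1 x.2.1 - dist x.1.2 x.2.2) ^ 2 := by
        funext x
        simp only [hdX, Prod.map, hg]
        rw [hρ12]; ring
      rw [this, integral_const_mul]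
    calc gwSqD dX (fun x x' : X₂ => dist x x') πstar μ₂
        ≤ gwCostD dX (fun x x' : X₂ => dist x x') (πstar.map g) := by
          apply csInf_le
          · exact ⟨0, fun c ⟨π', _, hc⟩ => hc ▸ gwCostD_nonneg _ _ π'⟩
          · refine ⟨πstar.map g, ⟨?_, ?_⟩, rfl⟩
            · rw [Measure.map_map measurable_fst hgm,
                show (Prod.fst ∘ g) = id from rfl, Measure.map_id]
            · rw [Measure.map_map measurable_snd hgm]
              exact hsnd
      _ = ρ₁ ^ 2 * C := hcostA
  -- Step 2 : lower bound for arbitrary S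
  have key : ∀ a ∈ {c | ∃ γ : Measure (S × X₁), IsCoupling γ σ μ₁ ∧
        c = gwCostD (fun s s' : S => dist s s') (fun x x' : X₁ => dist x x') γ},
      ∀ b ∈ {c | ∃ γ : Measure (S × X₂), IsCoupling γ σ μ₂ ∧
        c = gwCostD (fun s s' : S => dist s s') (fun x x' : X₂ => dist x x') γ},
      ρ₁ * ρ₂ * C ≤ ρ₁ * a + ρ₂ * b := by
    rintro a ⟨γ₁, hγ₁, rfl⟩ b ⟨γ₂, hγ₂, rfl⟩
    haveI : IsProbabilityMeasure γ₁ := by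
      constructor
      have h := congrArg (fun m : Measure S => m Set.univ) hγ₁.1
      simpa [Measure.map_apply measurable_fst MeasurableSet.univ] using h
    haveI : IsProbabilityMeasure γ₂ := by
      constructor
      have h := congrArg (fun m : Measure S => m Set.univ) hγ₂.1
      simpa [Measure.map_apply measurable_fst MeasurableSet.univ] using h
    haveI : Nonempty X₁ := by
      by_contra h
      rw [not_nonempty_iff] at h
      have hu : μ₁ Set.univ = 1 := measure_univ
      simp [Set.univ_eq_empty_iff.2 h] at hu
    haveI : Nonempty X₂ := by
      by_contra h
      rw [not_nonempty_iff] at h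
      have hu : μ₂ Set.univ = 1 := measure_univ
      simp [Set.univ_eq_empty_iff.2 h] at hu
    set κ₁ := γ₁.condKernel
    set κ₂ := γ₂.condKernel
    have hγ₁' : γ₁ = σ ⊗ₘ κ₁ := by
      conv_lhs => rw [← γ₁.disintegrate γ₁.condKernel]
      have hf : γ₁.fst = σ := hγ₁.1
      rw [hf]
    have hγ₂' : γ₂ = σ ⊗ₘ κ₂ := by
      conv_lhs => rw [← γ₂.disintegrate γ₂.condKernel]
      have hf : γ₂.fst = σ := hγ₂.1
      rw [hf]
    set τ : Measure (S × (X₁ × X₂)) := σ ⊗ₘ (κ₁ ×ₖ κ₂) with hτdef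
    haveI : IsProbabilityMeasure τ := by
      constructor
      rw [hτdef, Measure.compProd_apply_univ]
      exact measure_univ
    have hτ1 : τ.map (fun p => (p.1, p.2.1)) = γ₁ := by
      rw [hτdef, aux_glue_fst, ← hγ₁']
    have hτ2 : τ.map (fun p => (p.1, p.2.2)) = γ₂ := by
      rw [hτdef, aux_glue_snd, ← hγ₂']
    set π : Measure (X₁ × X₂) := τ.map Prod.snd with hπdef
    haveI : IsProbabilityMeasure π :=
      Measure.isProbabilityMeasure_map measurable_snd.aemeasurable
    have hπc : IsCoupling π μ₁ μ₂ := by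
      constructor
      · rw [hπdef, Measure.map_map measurable_fst measurable_snd]
        have : (Prod.fst ∘ (Prod.snd : S × (X₁ × X₂) → X₁ × X₂))
            = (Prod.snd ∘ fun p : S × (X₁ × X₂) => (p.1, p.2.1)) := rfl
        rw [this, ← Measure.map_map measurable_snd (by fun_prop), hτ1]
        exact hγ₁.2
      · rw [hπdef, Measure.map_map measurable_snd measurable_snd]
        have : (Prod.snd ∘ (Prod.snd : S × (X₁ × X₂) → X₁ × X₂))
            = (Prod.snd ∘ fun p : S × (X₁ × X₂) => (p.1, p.2.2)) := rfl
        rw [this, ← Measure.map_map measurable_snd (by fun_prop), hτ2]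
        exact hγ₂.2
    -- express the two costs as integrals over τ.prod τ
    set T := S × (X₁ × X₂)
    set F1 : T × T → ℝ := fun z => (dist z.1.1 z.2.1 - dist z.1.2.1 z.2.2.1) ^ 2 with hF1
    set F2 : T × T → ℝ := fun z => (dist z.1.1 z.2.1 - dist z.1.2.2 z.2.2.2) ^ 2 with hF2
    set H : T × T → ℝ := fun z => (dist z.1.2.1 z.2.2.1 - dist z.1.2.2 z.2.2.2) ^ 2 with hH
    have cF1 : Continuous F1 := by simp only [hF1]; exact (by fun_prop : Continuous fun z : (S × (X₁ × X₂)) × (S × (X₁ × X₂)) => (dist z.1.1 z.2.1 - dist z.1.2.1 z.2.2.1) ^ 2)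
    have cF2 : Continuous F2 := by simp only [hF2]; exact (by fun_prop : Continuous fun z : (S × (X₁ × X₂)) × (S × (X₁ × X₂)) => (dist z.1.1 z.2.1 - dist z.1.2.2 z.2.2.2) ^ 2)
    have cH : Continuous H := by simp only [hH]; exact (by fun_prop : Continuous fun z : (S × (X₁ × X₂)) × (S × (X₁ × X₂)) => (dist z.1.2.1 z.2.2.1 - dist z.1.2.2 z.2.2.2) ^ 2)
    have iF1 : Integrable F1 (τ.prod τ) := aux_integrable _ cF1
    have iF2 : Integrable F2 (τ.prod τ) := aux_integrable _ cF2
    have iH : Integrable H (τ.prod τ) := aux_integrable _ cH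
    have ea : gwCostD (fun s s' : S => dist s s') (fun x x' : X₁ => dist x x') γ₁
        = ∫ z, F1 z ∂(τ.prod τ) := by
      rw [gwCostD_eq_prod continuous_dist continuous_dist, ← hτ1,
        Measure.map_prod_map _ _ (by fun_prop) (by fun_prop),
        integral_map (by fun_prop) (Continuous.aestronglyMeasurable (by fun_prop))]
      rfl
    have eb : gwCostD (fun s s' : S => dist s s') (fun x x' : X₂ => dist x x') γ₂
        = ∫ z, F2 z ∂(τ.prod τ) := by
      rw [gwCostD_eq_prod continuous_dist continuous_dist, ← hτ2,
        Measure.map_prod_map _ _ (by fun_prop) (by fun_prop),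
        integral_map (by fun_prop) (Continuous.aestronglyMeasurable (by fun_prop))]
      rfl
    have eH : ∫ z, H z ∂(τ.prod τ)
        = ∫ w, (dist w.1.1 w.2.1 - dist w.1.2 w.2.2) ^ 2 ∂(π.prod π) := by
      rw [hπdef, Measure.map_prod_map _ _ measurable_snd measurable_snd,
        integral_map (by fun_prop) (Continuous.aestronglyMeasurable (by fun_prop))]
      rfl
    -- pointwise inequality and integration
    have hpt : ∀ z : T × T, ρ₁ * ρ₂ * H z ≤ ρ₁ * F1 z + ρ₂ * F2 z := by
      intro z
      simp only [hF1, hF2, hH]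
      set u := dist z.1.1 z.2.1
      set v := dist z.1.2.1 z.2.2.1
      set w := dist z.1.2.2 z.2.2.2
      rw [hρ12]
      nlinarith [sq_nonneg ((1 - ρ₂) * (u - v) + ρ₂ * (u - w))]
    have hint : ∫ z, ρ₁ * ρ₂ * H z ∂(τ.prod τ)
        ≤ ∫ z, (ρ₁ * F1 z + ρ₂ * F2 z) ∂(τ.prod τ) :=
      integral_mono (iH.const_mul _) ((iF1.const_mul _).add (iF2.const_mul _)) hpt
    have hsplit : ∫ z, (ρ₁ * F1 z + ρ₂ * F2 z) ∂(τ.prod τ)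
        = ρ₁ * ∫ z, F1 z ∂(τ.prod τ) + ρ₂ * ∫ z, F2 z ∂(τ.prod τ) := by
      rw [integral_add (iF1.const_mul _) (iF2.const_mul _), integral_const_mul,
        integral_const_mul]
    -- use optimality of πstar
    have hoptπ := hopt π hπc
    rw [show (∫ p, ∫ q, ρ₁ * ρ₂ * (dist p.1 q.1 - dist p.2 q.2) ^ 2 ∂πstar ∂πstar)
        = ρ₁ * ρ₂ * ∫ p, ∫ q, (dist p.1 q.1 - dist p.2 q.2) ^ 2 ∂πstar ∂πstar by
          simp [integral_const_mul],
      show (∫ p, ∫ q, ρ₁ * ρ₂ * (dist p.1 q.1 - dist p.2 q.2) ^ 2 ∂π ∂π)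
        = ρ₁ * ρ₂ * ∫ p, ∫ q, (dist p.1 q.1 - dist p.2 q.2) ^ 2 ∂π ∂π by
          simp [integral_const_mul]] at hoptπ
    have hdd : Continuous fun z : (X₁ × X₂) × (X₁ × X₂) =>
        (dist z.1.1 z.2.1 - dist z.1.2 z.2.2) ^ 2 := by fun_prop
    rw [aux_double πstar (F := fun p q => (dist p.1 q.1 - dist p.2 q.2) ^ 2) hdd,
      aux_double π (F := fun p q => (dist p.1 q.1 - dist p.2 q.2) ^ 2) hdd] at hoptπ
    calc ρ₁ * ρ₂ * C ≤ ρ₁ * ρ₂ * ∫ w, (dist w.1.1 w.2.1 - dist w.1.2 w.2.2) ^ 2 ∂(π.prod π) := hoptπ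
      _ = ∫ z, ρ₁ * ρ₂ * H z ∂(τ.prod τ) := by rw [integral_const_mul, eH]
      _ ≤ ∫ z, (ρ₁ * F1 z + ρ₂ * F2 z) ∂(τ.prod τ) := hint
      _ = ρ₁ * gwCostD (fun s s' : S => dist s s') (fun x x' : X₁ => dist x x') γ₁
          + ρ₂ * gwCostD (fun s s' : S => dist s s') (fun x x' : X₂ => dist x x') γ₂ := by
          rw [hsplit, ea, eb]
  -- combine
  have hne1 : Set.Nonempty {c | ∃ γ : Measure (S × X₁), IsCoupling γ σ μ₁ ∧
      c = gwCostD (fun s s' : S => dist s s') (fun x x' : X₁ => dist x x') γ} :=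
    ⟨_, ⟨σ.prod μ₁, aux_prod_coupling σ μ₁, rfl⟩⟩
  have hne2 : Set.Nonempty {c | ∃ γ : Measure (S × X₂), IsCoupling γ σ μ₂ ∧
      c = gwCostD (fun s s' : S => dist s s') (fun x x' : X₂ => dist x x') γ} :=
    ⟨_, ⟨σ.prod μ₂, aux_prod_coupling σ μ₂, rfl⟩⟩
  have hlow : ρ₁ * ρ₂ * C
      ≤ ρ₁ * gwSqD (fun s s' : S => dist s s') (fun x x' : X₁ => dist x x') σ μ₁
        + ρ₂ * gwSqD (fun s s' : S => dist s s') (fun x x' : X₂ => dist x x') σ μ₂ :=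
    aux_combine h₁ h₂ hne1 hne2 key
  have step1 : ρ₁ * gwSqD dX (fun x x' : X₁ => dist x x') πstar μ₁
      + ρ₂ * gwSqD dX (fun x x' : X₂ => dist x x') πstar μ₂ ≤ ρ₁ * ρ₂ * C := by
    have e1 := mul_le_mul_of_nonneg_left hub1 h₁
    have e2 := mul_le_mul_of_nonneg_left hub2 h₂
    have e3 : ρ₁ * (ρ₂ ^ 2 * C) + ρ₂ * (ρ₁ ^ 2 * C) = ρ₁ * ρ₂ * C := by
      rw [hρ12]; ring
    linarith
  exact le_trans step1 hlow
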